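/- Fix positive integers T, t and x ∈ ℝ^{Tt}. For k ∈ {1, …, Tt}: if z̃_{k−1} < 5/7, z̃_k ∈ [31/32, 33/32], and z̃_{k+1} ≤ 33/32, then Dominate(k) holds. -/

import Mathlib

set_option maxHeartbeats 1000000


/-- The `k`-th coordinate (1-indexed) of `x ∈ ℝ^d`, with out-of-range coordinates
(including the convention `x_0 = 0`) equal to `0`. -/
noncomputable def coord {d : ℕ} (x : EuclideanSpace ℝ (Fin d)) (k : ℕ) : ℝ :=
  if h : 1 ≤ k ∧ k ≤ d then x ⟨k - 1, by omega⟩ else 0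

/-- The piecewise scalar component `v_y` of the hard instance. -/
noncomputable def vFun (y x : ℝ) : ℝ :=
  if x ≤ 31 / 32 * y then x ^ 2 / 2
  else if x ≤ y then x ^ 2 / 2 - 16 * (x - 31 / 32 * y) ^ 2
  else if x ≤ 33 / 32 * y then x ^ 2 / 2 - y ^ 2 / 32 + 16 * (x - 33 / 32 * y) ^ 2
  else x ^ 2 / 2 - y ^ 2 / 32

/-- The quadratic (convex) part `q_{T,t}` of the hard instance, with the convention
`x_0 = 0` (encoded by `coord x 0 = 0`). -/
noncomputable def qFun (T t : ℕ) (x : EuclideanSpace ℝ (Fin (T * t))) : ℝ :=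
  (1 / 2) * ∑ i ∈ Finset.range t,
    ((7 / 8 * coord x (i * T) - coord x (i * T + 1)) ^ 2
      + ∑ j ∈ Finset.Icc 1 (T - 1), (coord x (i * T + j + 1) - coord x (i * T + j)) ^ 2)

/-- The reference vector `y ∈ ℝ^{Tt}` with `y_{qT+b} = (7/8)^q` for `b ∈ {1, …, T}`;
in 0-based indexing, `y i = (7/8)^(i / T)`. -/
noncomputable def yVec (T t : ℕ) : EuclideanSpace ℝ (Fin (T * t)) :=
  WithLp.toLp 2 (fun i => (7 / 8 : ℝ) ^ ((i : ℕ) / T))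

/-- The hard instance `g_{T,t}(x) = q_{T,t}(x) + Σ_{i=1}^{Tt} v_{y_i}(x_i)`. -/
noncomputable def gFun (T t : ℕ) (x : EuclideanSpace ℝ (Fin (T * t))) : ℝ :=
  qFun T t x + ∑ i : Fin (T * t), vFun (yVec T t i) (x i)

/-- Extended coordinates: `x̃_0 = 0`, `x̃_i = x_i` for `1 ≤ i ≤ Tt`, `x̃_{Tt+1} = x_{Tt}`. -/
noncomputable def xTilde (T t : ℕ) (x : EuclideanSpace ℝ (Fin (T * t))) (k : ℕ) : ℝ :=
  if k ≤ T * t then coord x k else coord x (T * t)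

/-- Extended reference coordinates: `ỹ_0 = 1`, `ỹ_i = y_i` for `1 ≤ i ≤ Tt`,
`ỹ_{Tt+1} = y_{Tt}`. -/
noncomputable def yTilde (T t : ℕ) (k : ℕ) : ℝ :=
  if k = 0 then 1
  else if k ≤ T * t then coord (yVec T t) k
  else coord (yVec T t) (T * t)

/-- The ratios `z̃_k = x̃_k / ỹ_k`. -/
noncomputable def zTilde (T t : ℕ) (x : EuclideanSpace ℝ (Fin (T * t))) (k : ℕ) : ℝ :=
  xTilde T t x k / yTilde T t k

/-- `Dominate k` holds iff `x_k = 0` or `|(∇g_{T,t}(x))_k| > 0.19·|x_k|`. -/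
def Dominate (T t : ℕ) (x : EuclideanSpace ℝ (Fin (T * t))) (k : ℕ) : Prop :=
  coord x k = 0 ∨ |coord (gradient (gFun T t) x) k| > 0.19 * |coord x k|

/-! ### Auxiliary material -/

/-- The pointwise derivative of `vFun y`. -/
noncomputable def vDeriv (y x : ℝ) : ℝ :=
  if x ≤ 31 / 32 * y then x
  else if x ≤ y then x - 32 * (x - 31 / 32 * y)
  else if x ≤ 33 / 32 * y then x + 32 * (x - 33 / 32 * y)
  else x

open Set in
lemma hasDerivAt_glue {f p q : ℝ → ℝ} {a b c d : ℝ} (hba : b < a) (hac : a < c)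
    (hp : HasDerivAt p d a) (hq : HasDerivAt q d a)
    (hfp : ∀ u, b < u → u ≤ a → f u = p u) (hfq : ∀ u, a ≤ u → u < c → f u = q u) :
    HasDerivAt f d a := by
  have e1 : f =ᶠ[nhdsWithin a (Set.Iic a)] p := by
    filter_upwards [mem_nhdsWithin_of_mem_nhds (Ioi_mem_nhds hba), self_mem_nhdsWithin] with
      u hu1 hu2
    exact hfp u hu1 hu2
  have e2 : f =ᶠ[nhdsWithin a (Set.Ici a)] q := by
    filter_upwards [mem_nhdsWithin_of_mem_nhds (Iio_mem_nhds hac), self_mem_nhdsWithin] with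
      u hu1 hu2
    exact hfq u hu2 hu1
  have h1 : HasDerivWithinAt f d (Set.Iic a) a :=
    (hp.hasDerivWithinAt).congr_of_eventuallyEq e1 (hfp a hba le_rfl)
  have h2 : HasDerivWithinAt f d (Set.Ici a) a :=
    (hq.hasDerivWithinAt).congr_of_eventuallyEq e2 (hfq a le_rfl hac)
  have h3 := h1.union h2
  rw [Set.Iic_union_Ici] at h3
  exact hasDerivWithinAt_univ.mp h3

lemma hd_p1 (s : ℝ) : HasDerivAt (fun u : ℝ => u ^ 2 / 2) s s := by
  have := (hasDerivAt_pow 2 s).div_const 2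
  refine this.congr_deriv ?_; push_cast; ring

lemma hd_p2 (y s : ℝ) :
    HasDerivAt (fun u : ℝ => u ^ 2 / 2 - 16 * (u - 31 / 32 * y) ^ 2)
      (s - 32 * (s - 31 / 32 * y)) s := by
  have h2 := (((hasDerivAt_id s).sub_const (31 / 32 * y)).pow 2).const_mul (16 : ℝ)
  have := (hd_p1 s).sub h2
  refine this.congr_deriv ?_; simp only [id_eq]; push_cast; ring

lemma hd_p3 (y s : ℝ) :
    HasDerivAt (fun u : ℝ => u ^ 2 / 2 - y ^ 2 / 32 + 16 * (u - 33 / 32 * y) ^ 2)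
      (s + 32 * (s - 33 / 32 * y)) s := by
  have h2 := (((hasDerivAt_id s).sub_const (33 / 32 * y)).pow 2).const_mul (16 : ℝ)
  have := ((hd_p1 s).sub_const (y ^ 2 / 32)).add h2
  refine this.congr_deriv ?_; simp only [id_eq]; push_cast; ring

lemma hd_p4 (y s : ℝ) : HasDerivAt (fun u : ℝ => u ^ 2 / 2 - y ^ 2 / 32) s s :=
  (hd_p1 s).sub_const _

lemma hasDerivAt_vFun {y : ℝ} (hy : 0 < y) (s : ℝ) :
    HasDerivAt (vFun y) (vDeriv y s) s := by
  have hb12 : 31 / 32 * y < y := by linarith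
  have hb23 : y < 33 / 32 * y := by linarith
  rcases lt_trichotomy s (31 / 32 * y) with h1 | h1 | h1
  · have hd : vDeriv y s = s := by unfold vDeriv; rw [if_pos h1.le]
    rw [hd]
    exact hasDerivAt_glue (b := s - 1) (sub_one_lt s) h1 (hd_p1 s) (hd_p1 s)
      (fun u _ hu => by unfold vFun; rw [if_pos (hu.trans h1.le)])
      (fun u _ hu => by unfold vFun; rw [if_pos hu.le])
  · subst h1
    have hd : vDeriv y (31 / 32 * y) = 31 / 32 * y := by unfold vDeriv; rw [if_pos le_rfl]
    rw [hd]
    have hq : HasDerivAt (fun u : ℝ => u ^ 2 / 2 - 16 * (u - 31 / 32 * y) ^ 2)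
        (31 / 32 * y) (31 / 32 * y) := by
      have := hd_p2 y (31 / 32 * y); convert this using 1; ring
    refine hasDerivAt_glue (b := 31 / 32 * y - 1) (sub_one_lt _) hb12 (hd_p1 _) hq ?_ ?_
    · intro u _ hu; unfold vFun; rw [if_pos hu]
    · intro u hu hu2
      rcases eq_or_lt_of_le hu with he | hlt
      · unfold vFun; rw [if_pos he.symm.le, ← he]; ring
      · unfold vFun; rw [if_neg (not_le.mpr hlt), if_pos hu2.le]
  · rcases lt_trichotomy s y with h2 | h2 | h2
    · have hd : vDeriv y s = s - 32 * (s - 31 / 32 * y) := by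
        unfold vDeriv; rw [if_neg (not_le.mpr h1), if_pos h2.le]
      rw [hd]
      exact hasDerivAt_glue h1 h2 (hd_p2 y s) (hd_p2 y s)
        (fun u hu hu2 => by unfold vFun; rw [if_neg (not_le.mpr hu), if_pos (hu2.trans h2.le)])
        (fun u hu hu2 => by unfold vFun; rw [if_neg (not_le.mpr (h1.trans_le hu)), if_pos hu2.le])
    · have hd0 : vDeriv y s = 0 := by
        unfold vDeriv; rw [if_neg (not_le.mpr h1), if_pos h2.le, h2]; ring
      rw [hd0]
      have hp : HasDerivAt (fun u : ℝ => u ^ 2 / 2 - 16 * (u - 31 / 32 * y) ^ 2) 0 s := by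
        have := hd_p2 y s; convert this using 1; rw [h2]; ring
      have hq : HasDerivAt
          (fun u : ℝ => u ^ 2 / 2 - y ^ 2 / 32 + 16 * (u - 33 / 32 * y) ^ 2) 0 s := by
        have := hd_p3 y s; convert this using 1; rw [h2]; ring
      refine hasDerivAt_glue h1 (by rw [h2]; exact hb23) hp hq ?_ ?_
      · intro u hu hu2; unfold vFun
        rw [if_neg (not_le.mpr hu), if_pos (hu2.trans h2.le)]
      · intro u hu hu2
        rcases eq_or_lt_of_le hu with he | hlt
        · unfold vFun
          rw [if_neg (not_le.mpr (by rw [← he]; exact h1)), if_pos (by rw [← he]; exact h2.le),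
            ← he, h2]
          ring
        · unfold vFun
          rw [if_neg (not_le.mpr (h1.trans hlt)), if_neg (not_le.mpr (by rw [← h2]; exact hlt)),
            if_pos hu2.le]
    · rcases lt_trichotomy s (33 / 32 * y) with h3 | h3 | h3
      · have hd : vDeriv y s = s + 32 * (s - 33 / 32 * y) := by
          unfold vDeriv
          rw [if_neg (not_le.mpr (hb12.trans h2)), if_neg (not_le.mpr h2), if_pos h3.le]
        rw [hd]
        exact hasDerivAt_glue h2 h3 (hd_p3 y s) (hd_p3 y s)
          (fun u hu hu2 => by
            unfold vFun
            rw [if_neg (not_le.mpr (hb12.trans hu)), if_neg (not_le.mpr hu),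
              if_pos (hu2.trans h3.le)])
          (fun u hu hu2 => by
            unfold vFun
            rw [if_neg (not_le.mpr (hb12.trans (h2.trans_le hu))),
              if_neg (not_le.mpr (h2.trans_le hu)), if_pos hu2.le])
      · have hd : vDeriv y s = s := by
          unfold vDeriv
          rw [if_neg (not_le.mpr (hb12.trans h2)), if_neg (not_le.mpr h2), if_pos h3.le, h3]
          ring
        rw [hd]
        have hp : HasDerivAt
            (fun u : ℝ => u ^ 2 / 2 - y ^ 2 / 32 + 16 * (u - 33 / 32 * y) ^ 2) s s := by
          have := hd_p3 y s; convert this using 1; rw [h3]; ring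
        refine hasDerivAt_glue h2 (lt_add_one s) hp (hd_p4 y s) ?_ ?_
        · intro u hu hu2; unfold vFun
          rw [if_neg (not_le.mpr (hb12.trans hu)), if_neg (not_le.mpr hu),
            if_pos (hu2.trans h3.le)]
        · intro u hu hu2
          rcases eq_or_lt_of_le hu with he | hlt
          · unfold vFun
            rw [if_neg (not_le.mpr (by rw [← he]; exact hb12.trans h2)),
              if_neg (not_le.mpr (by rw [← he]; exact h2)),
              if_pos (by rw [← he]; exact h3.le), ← he, h3]
            ring
          · unfold vFun
            rw [if_neg (not_le.mpr (hb12.trans (h2.trans hlt))),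
              if_neg (not_le.mpr (h2.trans hlt)),
              if_neg (not_le.mpr (by rw [← h3]; exact hlt))]
      · have hd : vDeriv y s = s := by
          unfold vDeriv
          rw [if_neg (not_le.mpr ((hb12.trans hb23).trans h3)),
            if_neg (not_le.mpr (hb23.trans h3)), if_neg (not_le.mpr h3)]
        rw [hd]
        exact hasDerivAt_glue h3 (lt_add_one s) (hd_p4 y s) (hd_p4 y s)
          (fun u hu _ => by
            unfold vFun
            rw [if_neg (not_le.mpr ((hb12.trans hb23).trans hu)),
              if_neg (not_le.mpr (hb23.trans hu)), if_neg (not_le.mpr hu)])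
          (fun u hu _ => by
            unfold vFun
            rw [if_neg (not_le.mpr ((hb12.trans hb23).trans (h3.trans_le hu))),
              if_neg (not_le.mpr (hb23.trans (h3.trans_le hu))),
              if_neg (not_le.mpr (h3.trans_le hu))])

/-- The coordinate evaluation as a continuous linear map. -/
noncomputable def coordCLM (d m : ℕ) : EuclideanSpace ℝ (Fin d) →L[ℝ] ℝ :=
  if h : 1 ≤ m ∧ m ≤ d then EuclideanSpace.proj (⟨m - 1, by omega⟩ : Fin d) else 0

lemma coord_eq_clm {d : ℕ} (x : EuclideanSpace ℝ (Fin d)) (m : ℕ) :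
    coord x m = coordCLM d m x := by
  unfold coord coordCLM
  split
  · simp [EuclideanSpace.proj]
  · simp

lemma hasFDerivAt_coord {d : ℕ} (m : ℕ) (x : EuclideanSpace ℝ (Fin d)) :
    HasFDerivAt (fun z : EuclideanSpace ℝ (Fin d) => coord z m) (coordCLM d m) x := by
  have : (fun z : EuclideanSpace ℝ (Fin d) => coord z m) = coordCLM d m :=
    funext fun z => coord_eq_clm z m
  rw [this]
  exact (coordCLM d m).hasFDerivAt

lemma coordCLM_single {d : ℕ} (m k : ℕ) (hk1 : 1 ≤ k) (hk2 : k ≤ d) (jf : Fin d)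
    (hjf : (jf : ℕ) = k - 1) :
    coordCLM d m (EuclideanSpace.single jf 1) = if m = k then 1 else 0 := by
  unfold coordCLM
  split
  · rename_i h
    have happ : (EuclideanSpace.proj (⟨m - 1, by omega⟩ : Fin d))
        (EuclideanSpace.single jf (1:ℝ))
        = EuclideanSpace.single jf (1:ℝ) ⟨m - 1, by omega⟩ := rfl
    rw [happ, EuclideanSpace.single_apply]
    by_cases hmk : m = k
    · rw [if_pos (by simp [Fin.ext_iff]; omega), if_pos hmk]
    · rw [if_neg (by simp [Fin.ext_iff]; omega), if_neg hmk]
  · rename_i h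
    rw [if_neg (by omega)]
    simp

lemma sum_range_mul_eq {M : Type*} [AddCommMonoid M] (f : ℕ → M) (T t : ℕ) :
    ∑ m ∈ Finset.range (T * t), f m
      = ∑ i ∈ Finset.range t, ∑ j ∈ Finset.range T, f (i * T + j) := by
  induction t with
  | zero => simp
  | succ n ih =>
    rw [Nat.mul_succ, Finset.sum_range_add, ih, Finset.sum_range_succ]
    congr 1
    exact Finset.sum_congr rfl fun j _ => by rw [Nat.mul_comm]

lemma sum_range_split_zero (T : ℕ) (hT : 0 < T) (f : ℕ → ℝ) :
    ∑ j ∈ Finset.range T, f j = f 0 + ∑ j ∈ Finset.Icc 1 (T - 1), f j := by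
  obtain ⟨S, rfl⟩ : ∃ S, T = S + 1 := ⟨T - 1, by omega⟩
  rw [Finset.sum_range_succ' f S]
  rw [show Finset.Icc 1 (S + 1 - 1) = Finset.Ico 1 (S + 1) by
    rw [Finset.Ico_add_one_right_eq_Icc]; congr 1]
  rw [Finset.sum_Ico_eq_sum_range]
  simp [add_comm]

/-- The edge coefficient `a_m`. -/
noncomputable def aCoef (T m : ℕ) : ℝ := if T ∣ m then 7 / 8 else 1

lemma qFun_eq (T t : ℕ) (hT : 0 < T) (x : EuclideanSpace ℝ (Fin (T * t))) :
    qFun T t x = (1 / 2) * ∑ m ∈ Finset.range (T * t),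
      (aCoef T m * coord x m - coord x (m + 1)) ^ 2 := by
  unfold qFun
  congr 1
  rw [sum_range_mul_eq]
  refine (Finset.sum_congr rfl fun i _ => ?_).symm
  rw [sum_range_split_zero T hT]
  congr 1
  · rw [add_zero, show aCoef T (i * T) = 7 / 8 from by
      unfold aCoef; rw [if_pos ⟨i, Nat.mul_comm i T⟩]]
  · refine Finset.sum_congr rfl fun j hj => ?_
    obtain ⟨hj1, hj2⟩ := Finset.mem_Icc.mp hj
    have hnd : ¬ T ∣ (i * T + j) := by
      rintro hdvd
      have h1 : T ∣ j := (Nat.dvd_add_right ⟨i, Nat.mul_comm i T⟩).mp hdvd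
      have := Nat.le_of_dvd (by omega) h1
      omega
    rw [show aCoef T (i * T + j) = 1 from by unfold aCoef; rw [if_neg hnd]]
    ring

lemma hasFDerivAt_qFun (T t : ℕ) (hT : 0 < T) (x : EuclideanSpace ℝ (Fin (T * t))) :
    HasFDerivAt (qFun T t)
      (∑ m ∈ Finset.range (T * t),
        (aCoef T m * coord x m - coord x (m + 1)) •
          (aCoef T m • coordCLM (T * t) m - coordCLM (T * t) (m + 1))) x := by
  have hfun : qFun T t = fun z => (1 / 2) * ∑ m ∈ Finset.range (T * t),
      (aCoef T m * coord z m - coord z (m + 1)) ^ 2 := funext fun z => qFun_eq T t hT z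
  rw [hfun]
  have hterm : ∀ m, HasFDerivAt
      (fun z : EuclideanSpace ℝ (Fin (T * t)) => (aCoef T m * coord z m - coord z (m + 1)) ^ 2)
      ((2 * (aCoef T m * coord x m - coord x (m + 1))) •
        (aCoef T m • coordCLM (T * t) m - coordCLM (T * t) (m + 1))) x := by
    intro m
    have hl : HasFDerivAt (fun z : EuclideanSpace ℝ (Fin (T * t)) =>
        aCoef T m * coord z m - coord z (m + 1))
        (aCoef T m • coordCLM (T * t) m - coordCLM (T * t) (m + 1)) x :=
      ((hasFDerivAt_coord m x).const_mul (aCoef T m)).sub (hasFDerivAt_coord (m + 1) x)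
    have h2 := (hasDerivAt_pow 2 (aCoef T m * coord x m - coord x (m + 1))).comp_hasFDerivAt x hl
    refine h2.congr_fderiv ?_
    push_cast
    rw [pow_one]
  have hsum := HasFDerivAt.fun_sum (fun m (_ : m ∈ Finset.range (T * t)) => hterm m)
  have hfin := hsum.const_mul (1 / 2 : ℝ)
  refine hfin.congr_fderiv ?_
  rw [Finset.smul_sum]
  refine Finset.sum_congr rfl fun m _ => ?_
  rw [smul_smul]
  congr 1
  ring

lemma coord_yVec (T t : ℕ) (m : ℕ) (h1 : 1 ≤ m) (h2 : m ≤ T * t) :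
    coord (yVec T t) m = (7 / 8 : ℝ) ^ ((m - 1) / T) := by
  unfold coord
  rw [dif_pos ⟨h1, h2⟩]
  unfold yVec
  rfl

lemma yVec_pos (T t : ℕ) (i : Fin (T * t)) : 0 < yVec T t i := by
  unfold yVec
  simp only [PiLp.toLp_apply]
  positivity

/-- For `k ∈ {1, …, Tt}`: if `z̃_{k-1} < 5/7`,
`z̃_k ∈ [31/32, 33/32]` and `z̃_{k+1} ≤ 33/32`, then `Dominate k` holds. -/
theorem dominate_of_entering (T t : ℕ) (hT : 0 < T) (ht : 0 < t)
    (x : EuclideanSpace ℝ (Fin (T * t))) (k : ℕ) (hk1 : 1 ≤ k) (hk2 : k ≤ T * t)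
    (h1 : zTilde T t x (k - 1) < 5 / 7)
    (h2 : zTilde T t x k ∈ Set.Icc (31 / 32 : ℝ) (33 / 32))
    (h3 : zTilde T t x (k + 1) ≤ 33 / 32) :
    Dominate T t x k := by
  have hkn : k - 1 < T * t := by omega
  set jf : Fin (T * t) := ⟨k - 1, hkn⟩ with hjf
  -- reference coordinate value
  have hY : coord (yVec T t) k = (7 / 8 : ℝ) ^ ((k - 1) / T) := coord_yVec T t k hk1 hk2
  set Y : ℝ := (7 / 8 : ℝ) ^ ((k - 1) / T) with hYdef
  have hYpos : 0 < Y := by positivity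
  -- unfold h2
  have hz : zTilde T t x k = coord x k / Y := by
    unfold zTilde xTilde yTilde
    rw [if_pos hk2, if_neg (by omega), if_pos hk2, hY]
  rw [hz] at h2
  obtain ⟨h2a, h2b⟩ := h2
  have hx1 : 31 / 32 * Y ≤ coord x k := by
    rw [le_div_iff₀ hYpos] at h2a; linarith
  have hx2 : coord x k ≤ 33 / 32 * Y := by
    rw [div_le_iff₀ hYpos] at h2b; linarith
  -- the left-neighbour bound
  have hA : aCoef T (k - 1) * coord x (k - 1) < 5 / 7 * Y := by
    rcases eq_or_lt_of_le hk1 with hk1' | hk1'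
    · have hc0 : coord x (k - 1) = 0 := by unfold coord; rw [dif_neg (by omega)]
      rw [hc0, mul_zero]; positivity
    · have hY' : yTilde T t (k - 1) = (7 / 8 : ℝ) ^ ((k - 2) / T) := by
        unfold yTilde
        rw [if_neg (by omega), if_pos (by omega), coord_yVec T t (k - 1) (by omega) (by omega)]
        congr 2
      have hY'pos : (0 : ℝ) < (7 / 8 : ℝ) ^ ((k - 2) / T) := by positivity
      have hx' : coord x (k - 1) < 5 / 7 * (7 / 8 : ℝ) ^ ((k - 2) / T) := by
        unfold zTilde xTilde at h1
        rw [if_pos (by omega), hY', div_lt_iff₀ hY'pos] at h1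
        linarith
      by_cases hdvd : T ∣ (k - 1)
      · have hstep : (k - 1) / T = (k - 2) / T + 1 := by
          have h := Nat.succ_div (a := k - 2) (b := T)
          rw [show k - 2 + 1 = k - 1 by omega] at h
          rw [h, if_pos hdvd]
        have hYs : Y = 7 / 8 * (7 / 8 : ℝ) ^ ((k - 2) / T) := by
          rw [hYdef, hstep, pow_succ]; ring
        rw [show aCoef T (k - 1) = 7 / 8 from by unfold aCoef; rw [if_pos hdvd], hYs]
        nlinarith
      · have hstep : (k - 1) / T = (k - 2) / T := by
          have h := Nat.succ_div (a := k - 2) (b := T)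
          rw [show k - 2 + 1 = k - 1 by omega] at h
          rw [h, if_neg hdvd, add_zero]
        rw [show aCoef T (k - 1) = 1 from by unfold aCoef; rw [if_neg hdvd], one_mul,
          hYdef, hstep]
        exact hx'
  -- the right-neighbour bound
  have hR : (if k < (T * t) then aCoef T k * (aCoef T k * coord x k - coord x (k + 1)) else 0)
      ≥ coord x k - 33 / 32 * Y := by
    by_cases hkn' : k < (T * t)
    · rw [if_pos hkn']
      have hY'' : yTilde T t (k + 1) = (7 / 8 : ℝ) ^ (k / T) := by
        unfold yTilde
        rw [if_neg (by omega), if_pos (by omega), coord_yVec T t (k + 1) (by omega) (by omega)]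
        congr 2
      have hx'' : coord x (k + 1) ≤ 33 / 32 * (7 / 8 : ℝ) ^ (k / T) := by
        unfold zTilde xTilde at h3
        rw [if_pos (by omega), hY'', div_le_iff₀ (by positivity)] at h3
        linarith
      by_cases hdvd : T ∣ k
      · have hstep : k / T = (k - 1) / T + 1 := by
          have h := Nat.succ_div (a := k - 1) (b := T)
          rw [show k - 1 + 1 = k by omega] at h
          rw [h, if_pos hdvd]
        have hYY : (7 / 8 : ℝ) ^ (k / T) = 7 / 8 * Y := by
          rw [hstep, pow_succ, hYdef]; ring
        rw [show aCoef T k = 7 / 8 from by unfold aCoef; rw [if_pos hdvd]]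
        rw [hYY] at hx''
        nlinarith
      · have hstep : k / T = (k - 1) / T := by
          have h := Nat.succ_div (a := k - 1) (b := T)
          rw [show k - 1 + 1 = k by omega] at h
          rw [h, if_neg hdvd, add_zero]
        have hYY : (7 / 8 : ℝ) ^ (k / T) = Y := by rw [hstep, hYdef]
        rw [show aCoef T k = 1 from by unfold aCoef; rw [if_neg hdvd], one_mul]
        rw [hYY] at hx''
        linarith
    · rw [if_neg hkn']
      linarith
  -- derivative of the v-part at x k
  set W := vDeriv Y (coord x k) with hWdef
  have hWval : (coord x k ≤ Y ∧ W = coord x k - 32 * (coord x k - 31 / 32 * Y)) ∨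
      (Y < coord x k ∧ W = coord x k + 32 * (coord x k - 33 / 32 * Y)) := by
    by_cases hc : coord x k ≤ Y
    · left
      refine ⟨hc, ?_⟩
      by_cases hc1 : coord x k ≤ 31 / 32 * Y
      · have he : coord x k = 31 / 32 * Y := le_antisymm hc1 hx1
        rw [hWdef]; unfold vDeriv; rw [if_pos hc1, he]; ring
      · rw [hWdef]; unfold vDeriv; rw [if_neg hc1, if_pos hc]
    · right
      push_neg at hc
      refine ⟨hc, ?_⟩
      rw [hWdef]; unfold vDeriv
      rw [if_neg (by nlinarith), if_neg (not_le.mpr hc), if_pos (by linarith)]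
  -- the full derivative
  have hq := hasFDerivAt_qFun T t hT x
  have hv : HasFDerivAt
      (fun z : EuclideanSpace ℝ (Fin (T * t)) => ∑ i : Fin (T * t), vFun (yVec T t i) (z i))
      (∑ i : Fin (T * t), vDeriv (yVec T t i) (x i) •
        (EuclideanSpace.proj i : EuclideanSpace ℝ (Fin (T * t)) →L[ℝ] ℝ)) x :=
    HasFDerivAt.fun_sum fun i _ => by
      have := (hasDerivAt_vFun (yVec_pos T t i) (x i)).comp_hasFDerivAt x
        ((EuclideanSpace.proj i :
          EuclideanSpace ℝ (Fin (T * t)) →L[ℝ] ℝ).hasFDerivAt (x := x))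
      exact this
  have hg : HasFDerivAt (gFun T t)
      ((∑ m ∈ Finset.range (T * t),
        (aCoef T m * coord x m - coord x (m + 1)) •
          (aCoef T m • coordCLM (T * t) m - coordCLM (T * t) (m + 1)))
       + (∑ i : Fin (T * t), vDeriv (yVec T t i) (x i) •
        (EuclideanSpace.proj i : EuclideanSpace ℝ (Fin (T * t)) →L[ℝ] ℝ))) x := hq.add hv
  set L := (∑ m ∈ Finset.range (T * t),
        (aCoef T m * coord x m - coord x (m + 1)) •
          (aCoef T m • coordCLM (T * t) m - coordCLM (T * t) (m + 1)))
       + (∑ i : Fin (T * t), vDeriv (yVec T t i) (x i) •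
        (EuclideanSpace.proj i : EuclideanSpace ℝ (Fin (T * t)) →L[ℝ] ℝ)) with hL
  -- coordinate of the gradient
  have hgrad : coord (gradient (gFun T t) x) k = L (EuclideanSpace.single jf (1 : ℝ)) := by
    rw [hg.hasGradientAt.gradient]
    unfold coord
    rw [dif_pos ⟨hk1, hk2⟩]
    have h1' : ((InnerProductSpace.toDual ℝ (EuclideanSpace ℝ (Fin (T * t)))).symm L) jf
        = L (EuclideanSpace.single jf (1 : ℝ)) := by
      rw [← InnerProductSpace.toDual_symm_apply (𝕜 := ℝ)]
      rw [real_inner_comm, EuclideanSpace.inner_single_left]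
      simp
    exact h1'
  -- evaluate L on the basis vector
  have hLQe : (∑ m ∈ Finset.range (T * t),
      (aCoef T m * coord x m - coord x (m + 1)) •
        (aCoef T m • coordCLM (T * t) m - coordCLM (T * t) (m + 1)))
        (EuclideanSpace.single jf (1 : ℝ))
      = (if k < (T * t) then aCoef T k * (aCoef T k * coord x k - coord x (k + 1)) else 0)
        - (aCoef T (k - 1) * coord x (k - 1) - coord x k) := by
    rw [ContinuousLinearMap.sum_apply]
    have hterm : ∀ m, ((aCoef T m * coord x m - coord x (m + 1)) •
        (aCoef T m • coordCLM (T * t) m - coordCLM (T * t) (m + 1))) (EuclideanSpace.single jf (1 : ℝ))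
        = (if m = k then aCoef T k * (aCoef T k * coord x k - coord x (k + 1)) else 0)
          - (if m = k - 1 then aCoef T (k - 1) * coord x (k - 1) - coord x k else 0) := by
      intro m
      rw [ContinuousLinearMap.smul_apply, ContinuousLinearMap.sub_apply,
        ContinuousLinearMap.smul_apply, coordCLM_single m k hk1 hk2 jf rfl,
        coordCLM_single (m + 1) k hk1 hk2 jf rfl]
      rw [show (if m + 1 = k then (1:ℝ) else 0) = (if m = k - 1 then 1 else 0) from by
        rcases eq_or_ne (m + 1) k with h | h
        · rw [if_pos h, if_pos (by omega)]
        · rw [if_neg h, if_neg (by omega)]]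
      split_ifs with ha hb hb
      · omega
      · subst ha
        simp only [smul_eq_mul, mul_one, mul_zero, sub_zero]
        ring
      · subst hb
        rw [show k - 1 + 1 = k from by omega]
        simp only [smul_eq_mul, mul_one, mul_zero, zero_sub, zero_mul]
        ring
      · simp
    rw [Finset.sum_congr rfl fun m _ => hterm m, Finset.sum_sub_distrib,
      Finset.sum_ite_eq', Finset.sum_ite_eq']
    simp only [Finset.mem_range]
    rw [if_pos (by omega : k - 1 < (T * t))]
  have hLVe : (∑ i : Fin (T * t), vDeriv (yVec T t i) (x i) •
      (EuclideanSpace.proj i : EuclideanSpace ℝ (Fin (T * t)) →L[ℝ] ℝ))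
        (EuclideanSpace.single jf (1 : ℝ)) = W := by
    rw [ContinuousLinearMap.sum_apply]
    have hpr : ∀ i : Fin (T * t), (EuclideanSpace.proj i :
        EuclideanSpace ℝ (Fin (T * t)) →L[ℝ] ℝ) (EuclideanSpace.single jf (1 : ℝ))
        = if i = jf then 1 else 0 := by
      intro i
      have : (EuclideanSpace.proj i : EuclideanSpace ℝ (Fin (T * t)) →L[ℝ] ℝ)
          (EuclideanSpace.single jf (1 : ℝ)) = EuclideanSpace.single jf (1 : ℝ) i := rfl
      rw [this, EuclideanSpace.single_apply]
    simp only [ContinuousLinearMap.smul_apply, hpr, smul_eq_mul, mul_ite, mul_one, mul_zero]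
    rw [Finset.sum_ite_eq']
    rw [if_pos (Finset.mem_univ jf)]
    have hxj : x jf = coord x k := by
      unfold coord
      rw [dif_pos ⟨hk1, hk2⟩]
    have hyj : yVec T t jf = Y := by
      unfold yVec
      rfl
    rw [hxj, hyj]
  -- final computation
  have hN : coord (gradient (gFun T t) x) k
      = (if k < (T * t) then aCoef T k * (aCoef T k * coord x k - coord x (k + 1)) else 0)
        - (aCoef T (k - 1) * coord x (k - 1) - coord x k) + W := by
    rw [hgrad, hL, ContinuousLinearMap.add_apply, hLQe, hLVe]
  have hxpos : 0 < coord x k := lt_of_lt_of_le (by positivity) hx1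
  have h019 : (0.19 : ℝ) = 19 / 100 := by norm_num
  have hmain : coord (gradient (gFun T t) x) k > 0.19 * coord x k := by
    rw [hN, h019]
    rcases hWval with ⟨hc, hWe⟩ | ⟨hc, hWe⟩
    · rw [hWe]
      have := hR
      linarith
    · rw [hWe]
      have := hR
      linarith
  right
  rw [abs_of_pos hxpos, abs_of_pos (lt_trans (by rw [h019]; positivity) hmain)]
  exact hmain
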